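/- Let H be a finite-dimensional complex Hilbert space and 𝒱 a subgroup of the unitary group U(H), with closure 𝒱̄. Then the following four closed convex cones in the space L of linear maps End(H) → End(H) coincide: (i) the closure of the convex cone generated by {(A ↦ V A V* − A) : V ∈ 𝒱}; (ii) the closure of the convex cone generated by {(A ↦ V A V* − A) : V ∈ 𝒱̄}; (iii) the closure of the convex cone generated by {𝔘 − id : 𝔘 ∈ DM_ru(𝒱)}; (iv) the closure of the convex cone generated by {𝔘 − id : 𝔘 ∈ DM_ru(𝒱̄)}. -/

import Mathlib

/-- Conjugation `A ↦ V A V*` by an operator `V`, as a continuous linear map on `End(H)`. -/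
noncomputable def conjCLM {H : Type*} [NormedAddCommGroup H] [InnerProductSpace ℂ H]
    [FiniteDimensional ℂ H] (V : H →L[ℂ] H) :
    (H →L[ℂ] H) →L[ℂ] (H →L[ℂ] H) :=
  ContinuousLinearMap.mulLeftRight ℂ (H →L[ℂ] H) V (star V)

/-- The convex cone generated by a set `S` in a real vector space: the set of nonnegative
multiples of elements of the convex hull of `S`. -/
def coneGen {M : Type*} [AddCommMonoid M] [Module ℝ M] (S : Set M) : Set M :=
  {x | ∃ r : ℝ, 0 ≤ r ∧ ∃ y ∈ convexHull ℝ S, x = r • y}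

/-- `DMru 𝒲`: the convex hull, in the space of (continuous) linear maps on `End(H)`, of the set
of conjugations `A ↦ V A V*` with `V ∈ 𝒲`. -/
noncomputable def DMru {H : Type*} [NormedAddCommGroup H] [InnerProductSpace ℂ H]
    [FiniteDimensional ℂ H] (W : Set (H →L[ℂ] H)) :
    Set ((H →L[ℂ] H) →L[ℂ] (H →L[ℂ] H)) :=
  convexHull ℝ {T | ∃ V ∈ W, T = conjCLM V}

section auxCone

variable {M : Type*} [AddCommMonoid M] [Module ℝ M]

lemma subset_coneGen (S : Set M) : S ⊆ coneGen S := fun x hx =>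
  ⟨1, zero_le_one, x, subset_convexHull ℝ S hx, (one_smul ℝ x).symm⟩

lemma coneGen_mono {S T : Set M} (h : S ⊆ T) : coneGen S ⊆ coneGen T := by
  rintro x ⟨r, hr, y, hy, rfl⟩
  exact ⟨r, hr, y, convexHull_mono h hy, rfl⟩

lemma smul_mem_coneGen {S : Set M} {r : ℝ} (hr : 0 ≤ r) {x : M} (hx : x ∈ coneGen S) :
    r • x ∈ coneGen S := by
  obtain ⟨r', hr', y, hy, rfl⟩ := hx
  exact ⟨r * r', mul_nonneg hr hr', y, hy, smul_smul r r' y⟩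

lemma coneGen_convex (S : Set M) : Convex ℝ (coneGen S) := by
  rintro x ⟨r, hr, y, hy, rfl⟩ x' ⟨r', hr', y', hy', rfl⟩ t t' ht ht' htt
  by_cases hs : t * r + t' * r' = 0
  · have h1 : t * r = 0 := by nlinarith [mul_nonneg ht hr, mul_nonneg ht' hr']
    have h2 : t' * r' = 0 := by nlinarith [mul_nonneg ht hr, mul_nonneg ht' hr']
    refine ⟨0, le_refl 0, y, hy, ?_⟩
    simp [smul_smul, h1, h2]
  · set s := t * r + t' * r'
    have hs0 : 0 < s := lt_of_le_of_ne (by positivity) (Ne.symm hs)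
    refine ⟨s, hs0.le, (t * r / s) • y + (t' * r' / s) • y', ?_, ?_⟩
    · exact (convex_convexHull ℝ S) hy hy' (by positivity) (by positivity) (by field_simp; rfl)
    · rw [smul_add, smul_smul, smul_smul, smul_smul, smul_smul]
      congr 1 <;> congr 1 <;> field_simp

lemma coneGen_convexHull (S : Set M) : coneGen (convexHull ℝ S) = coneGen S := by
  unfold coneGen
  rw [(convex_convexHull ℝ S).convexHull_eq]

end auxCone

section auxTop

variable {M : Type*} [AddCommMonoid M] [Module ℝ M] [TopologicalSpace M]
  [ContinuousAdd M] [ContinuousConstSMul ℝ M]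

set_option maxHeartbeats 1000000 in
/-- Master lemma: if `S ⊆ T ⊆ closure (coneGen S)`, the generated closed cones agree. -/
lemma closure_coneGen_eq_of_subset {S T : Set M} (hST : S ⊆ T)
    (hT : T ⊆ closure (coneGen S)) :
    closure (coneGen S) = closure (coneGen T) := by
  apply le_antisymm (closure_mono (coneGen_mono hST))
  apply closure_minimal _ isClosed_closure
  have hconv : Convex ℝ (closure (coneGen S)) := by
    intro x hx y hy t s ht hs hts
    exact map_mem_closure₂ (f := fun a b : M => t • a + s • b)
      ((continuous_fst.const_smul t).add (continuous_snd.const_smul s)) hx hy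
      (fun a ha b hb => (coneGen_convex S) ha hb ht hs hts)
  rintro x ⟨r, hr, y, hy, rfl⟩
  have hy' : y ∈ closure (coneGen S) :=
    hconv.convexHull_subset_iff.mpr hT hy
  exact map_mem_closure (continuous_const_smul r) hy'
    fun z hz => smul_mem_coneGen hr hz

end auxTop

section auxConj

variable {H : Type*} [NormedAddCommGroup H] [InnerProductSpace ℂ H] [FiniteDimensional ℂ H]

set_option synthInstance.maxHeartbeats 1000000 in
set_option maxHeartbeats 1000000 in
lemma continuous_conjCLM :
    Continuous fun V : H →L[ℂ] H => conjCLM V := by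
  unfold conjCLM
  exact (ContinuousLinearMap.mulLeftRight ℂ (H →L[ℂ] H)).continuous.clm_apply
    continuous_star

lemma setEq (W : Set (H →L[ℂ] H)) :
    {T | ∃ V ∈ W, T = conjCLM V - ContinuousLinearMap.id ℂ (H →L[ℂ] H)}
      = (fun T => T - ContinuousLinearMap.id ℂ (H →L[ℂ] H)) '' {T | ∃ V ∈ W, T = conjCLM V} := by
  ext x
  constructor
  · rintro ⟨V, hV, rfl⟩; exact ⟨conjCLM V, ⟨V, hV, rfl⟩, rfl⟩
  · rintro ⟨T, ⟨V, hV, rfl⟩, rfl⟩; exact ⟨V, hV, rfl⟩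

lemma image_DMru (W : Set (H →L[ℂ] H)) :
    (fun T => T - ContinuousLinearMap.id ℂ (H →L[ℂ] H)) '' DMru W
      = convexHull ℝ {T | ∃ V ∈ W, T = conjCLM V - ContinuousLinearMap.id ℂ (H →L[ℂ] H)} := by
  rw [setEq]
  unfold DMru
  have : (fun T : (H →L[ℂ] H) →L[ℂ] (H →L[ℂ] H) =>
      T - ContinuousLinearMap.id ℂ (H →L[ℂ] H)) =
      ⇑(AffineEquiv.constVAdd ℝ ((H →L[ℂ] H) →L[ℂ] (H →L[ℂ] H))
        (-(ContinuousLinearMap.id ℂ (H →L[ℂ] H)))).toAffineMap := by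
    ext T; simp [sub_eq_neg_add]
  rw [this, ← AffineMap.image_convexHull]

end auxConj

set_option synthInstance.maxHeartbeats 2000000 in
set_option maxHeartbeats 4000000 in
/-- For a subgroup `𝒱` of the unitary group of `H` with closure `𝒱̄`, the four
closed convex cones generated by `{conj V − id : V ∈ 𝒱}`, `{conj V − id : V ∈ 𝒱̄}`,
`{𝔘 − id : 𝔘 ∈ DMru 𝒱}` and `{𝔘 − id : 𝔘 ∈ DMru 𝒱̄}` coincide. -/
theorem four_cones_eq
    {H : Type*} [NormedAddCommGroup H] [InnerProductSpace ℂ H] [FiniteDimensional ℂ H]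
    (𝒱 : Set (H →L[ℂ] H))
    (hsub : 𝒱 ⊆ unitary (H →L[ℂ] H))
    (h1 : (1 : H →L[ℂ] H) ∈ 𝒱)
    (hmul : ∀ v ∈ 𝒱, ∀ w ∈ 𝒱, v * w ∈ 𝒱)
    (hstar : ∀ v ∈ 𝒱, star v ∈ 𝒱) :
    closure (coneGen
        {T | ∃ V ∈ 𝒱, T = conjCLM V - ContinuousLinearMap.id ℂ (H →L[ℂ] H)})
      = closure (coneGen
        {T | ∃ V ∈ closure 𝒱, T = conjCLM V - ContinuousLinearMap.id ℂ (H →L[ℂ] H)}) ∧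
    closure (coneGen
        {T | ∃ V ∈ 𝒱, T = conjCLM V - ContinuousLinearMap.id ℂ (H →L[ℂ] H)})
      = closure (coneGen
        ((fun T => T - ContinuousLinearMap.id ℂ (H →L[ℂ] H)) '' DMru 𝒱)) ∧
    closure (coneGen
        {T | ∃ V ∈ 𝒱, T = conjCLM V - ContinuousLinearMap.id ℂ (H →L[ℂ] H)})
      = closure (coneGen
        ((fun T => T - ContinuousLinearMap.id ℂ (H →L[ℂ] H)) '' DMru (closure 𝒱))) := by
  set S1 := {T | ∃ V ∈ 𝒱, T = conjCLM V - ContinuousLinearMap.id ℂ (H →L[ℂ] H)} with hS1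
  set S2 := {T | ∃ V ∈ closure 𝒱, T = conjCLM V - ContinuousLinearMap.id ℂ (H →L[ℂ] H)}
    with hS2
  have key : closure (coneGen S1) = closure (coneGen S2) := by
    apply closure_coneGen_eq_of_subset
    · rintro x ⟨V, hV, rfl⟩; exact ⟨V, subset_closure hV, rfl⟩
    · rintro x ⟨V, hV, rfl⟩
      have hx : conjCLM V - ContinuousLinearMap.id ℂ (H →L[ℂ] H) ∈ closure S1 := by
        refine map_mem_closure
          (f := fun V : H →L[ℂ] H => conjCLM V - ContinuousLinearMap.id ℂ (H →L[ℂ] H))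
          (continuous_conjCLM.sub continuous_const) hV ?_
        rintro W hW; exact ⟨W, hW, rfl⟩
      exact closure_mono (subset_coneGen S1) hx
  refine ⟨key, ?_, ?_⟩
  · rw [image_DMru, coneGen_convexHull]
  · rw [image_DMru, coneGen_convexHull]
    exact key
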